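/- Let A > 1 be an integer and c_A = 2A²/(A² − 1). Then π_A(N) ~ c_A · A^N / N as N → ∞ along even integers; that is, the ratio π_A(N) / (c_A A^N / N) tends to 1 as N → ∞ through even N. -/

import Mathlib

open Filter

namespace Winding

/-- Words of length `n` over the alphabet `{1,…,A}`; the `i`-th letter is `(α i).1 + 1`. -/
abbrev Word (A n : ℕ) : Type := Fin n → Fin A

/-- The `i`-th partial quotient `a_{i+1} ∈ {1,…,A}` of a word. -/
def letter {A n : ℕ} (α : Word A n) (i : Fin n) : ℕ := (α i).1 + 1

/-- `α` has period `d`: `d` is a positive divisor of `n` and `a_i = a_{i+d}` whenever in range. -/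
def HasPeriod {A n : ℕ} (α : Word A n) (d : ℕ) : Prop :=
  0 < d ∧ d ∣ n ∧
    ∀ (i : ℕ) (h : i + d < n),
      α ⟨i, Nat.lt_of_le_of_lt (Nat.le_add_right i d) h⟩ = α ⟨i + d, h⟩

/-- The minimal period of a word. -/
noncomputable def mp {A n : ℕ} (α : Word A n) : ℕ := sInf {d | HasPeriod α d}

/-- A word of even length `n` is primitive if `mp α = n`, or `n/2` is odd and `mp α = n/2`. -/
def Primitive {A n : ℕ} (α : Word A n) : Prop :=
  mp α = n ∨ (Odd (n / 2) ∧ mp α = n / 2)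

/-- Cyclic shift of a word by `s` positions. -/
def shift {A n : ℕ} (s : ℕ) (α : Word A n) : Word A n :=
  fun i => α ⟨(i.1 + s) % n, Nat.mod_lt _ i.pos⟩

/-- Even cyclic shift relation. -/
def ShiftRel (A n : ℕ) (α β : Word A n) : Prop :=
  ∃ s : ℕ, Even s ∧ β = shift s α

/-- Primitive words of length `n`. -/
def PrimWord (A n : ℕ) : Type := {α : Word A n // Primitive α}

instance {A n : ℕ} : Finite (PrimWord A n) := by unfold PrimWord; infer_instance

/-- `P_n`: equivalence classes of primitive words of length `n` under even cyclic shifts. -/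
def GeodClass (A n : ℕ) : Type :=
  Quot (fun α β : PrimWord A n => ShiftRel A n α.1 β.1)

instance {A n : ℕ} : Finite (GeodClass A n) :=
  Finite.of_surjective _ (Quot.mk_surjective)

instance (N : ℕ) : Finite {n : ℕ // n ≤ N ∧ Even n} :=
  Finite.of_injective (fun x => (⟨x.1, Nat.lt_succ_of_le x.2.1⟩ : Fin (N + 1)))
    fun x y h => Subtype.ext (by simpa using congrArg Fin.val h)

/-- `Π_A(N)`: the disjoint union of the `P_n` over even `n ≤ N`. -/
def Geod (A N : ℕ) : Type := Σ n : {n : ℕ // n ≤ N ∧ Even n}, GeodClass A n.1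

instance {A N : ℕ} : Finite (Geod A N) := by unfold Geod; infer_instance

/-- `π_A(N) = |Π_A(N)|`. -/
noncomputable def piA (A N : ℕ) : ℕ := Nat.card (Geod A N)

/-- The winding number `Ψ(α) = a_1 - a_2 + a_3 - ⋯ - a_n`. -/
def winding {A n : ℕ} (α : Word A n) : ℤ :=
  ∑ i : Fin n, (-1) ^ (i : ℕ) * (letter α i : ℤ)

/-- Winding number of a closed geodesic (well defined on classes since `Ψ` is invariant
under even cyclic shifts; here computed on a choice of representative). -/
noncomputable def windingG {A N : ℕ} (C : Geod A N) : ℤ := winding C.2.out.1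

/-- Period length `ℓ_p` of a closed geodesic. -/
def plenG {A N : ℕ} (C : Geod A N) : ℕ := C.1.1

/-- Word length `ℓ_w(α) = 2 ∑ a_i`. -/
def wlen {A n : ℕ} (α : Word A n) : ℕ := 2 * ∑ i : Fin n, letter α i

/-- Word length of a closed geodesic. -/
noncomputable def wlenG {A N : ℕ} (C : Geod A N) : ℕ := wlen C.2.out.1

/-- Value of a finite continued fraction `b_1 + 1/(b_2 + 1/(⋯ + 1/b_k))`. -/
noncomputable def cfVal : List ℕ → ℝ
  | [] => 0
  | b :: l => b + 1 / cfVal l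

/-- The block `l` repeated `m` times. -/
def repBlock (l : List ℕ) : ℕ → List ℕ
  | 0 => []
  | m + 1 => l ++ repBlock l m

/-- Value of the purely periodic continued fraction with repeating block `l`:
the limit of the values of the finite continued fractions obtained by repeating `l`. -/
noncomputable def periodicVal (l : List ℕ) : ℝ :=
  limUnder atTop fun m => cfVal (repBlock l m)

/-- The list of partial quotients of a word. -/
def toList {A n : ℕ} (α : Word A n) : List ℕ := List.ofFn (letter α)

/-- `T^j ᾱ`: the purely periodic continued fraction whose repeating block is the
cyclic shift of `α` by `j`. -/
noncomputable def Tpow {A n : ℕ} (α : Word A n) (j : ℕ) : ℝ :=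
  periodicVal (toList (shift j α))

/-- Geometric length `ℓ_g(α) = 2 ∑_{j=1}^n log (T^j ᾱ)`. -/
noncomputable def glen {A n : ℕ} (α : Word A n) : ℝ :=
  2 * ∑ j : Fin n, Real.log (Tpow α (j.1 + 1))

/-- Geometric length of a closed geodesic. -/
noncomputable def glenG {A N : ℕ} (C : Geod A N) : ℝ := glen C.2.out.1



section Aux
variable {A n : ℕ}

lemma shift_apply (s : ℕ) (α : Word A n) (i : Fin n) :
    shift s α i = α ⟨(i.1 + s) % n, Nat.mod_lt _ i.pos⟩ := rfl

lemma shift_zero (α : Word A n) : shift 0 α = α := by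
  funext i
  rw [shift_apply]
  congr 1
  exact Fin.ext (by simp [Nat.mod_eq_of_lt i.isLt])

lemma shift_shift (s t : ℕ) (α : Word A n) : shift s (shift t α) = shift (t + s) α := by
  funext i
  rw [shift_apply, shift_apply, shift_apply]
  congr 1
  apply Fin.ext
  show ((i.1 + s) % n + t) % n = (i.1 + (t + s)) % n
  rw [Nat.mod_add_mod]
  congr 1
  omega

lemma shift_mod (s : ℕ) (α : Word A n) : shift (s % n) α = shift s α := by
  funext i
  rw [shift_apply, shift_apply]
  congr 1
  apply Fin.ext
  show (i.1 + s % n) % n = (i.1 + s) % n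
  conv_lhs => rw [Nat.add_mod]
  conv_rhs => rw [Nat.add_mod]
  rw [Nat.mod_mod_of_dvd _ dvd_rfl]

lemma shift_inv (hn : 0 < n) (s : ℕ) (α : Word A n) :
    shift (n - s % n) (shift s α) = α := by
  rw [shift_shift, ← shift_mod]
  have hlt : s % n < n := Nat.mod_lt _ hn
  have hd := Nat.mod_add_div s n
  have hmul : n * (s / n + 1) = n * (s / n) + n := by ring
  have : (s + (n - s % n)) = n * (s / n + 1) := by omega
  rw [this, Nat.mul_mod_right, shift_zero]

lemma eval_mod {α : Word A n} {d : ℕ} (hp : HasPeriod α d) :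
    ∀ (i : ℕ) (h : i < n),
      α ⟨i, h⟩ = α ⟨i % d, Nat.lt_of_le_of_lt (Nat.mod_le _ _) h⟩ := by
  obtain ⟨hd, hdvd, hper⟩ := hp
  intro i
  induction i using Nat.strong_induction_on with
  | _ i ih =>
    intro h
    rcases lt_or_ge i d with hid | hid
    · congr 1
      exact Fin.ext (by simp [Nat.mod_eq_of_lt hid])
    · have h1 : i - d + d < n := by omega
      have e1 := hper (i - d) h1
      have e2 : α ⟨i, h⟩ = α ⟨i - d, by omega⟩ := by
        rw [e1]; congr 1; rw [Fin.mk_eq_mk]; omega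
      rw [e2, ih (i - d) (by omega) (by omega)]
      congr 1
      apply Fin.ext
      show (i - d) % d = i % d
      conv_rhs => rw [show i = (i - d) + d by omega, Nat.add_mod_right]

lemma hasPeriod_self (α : Word A n) (hn : 0 < n) : HasPeriod α n :=
  ⟨hn, dvd_rfl, fun i h => absurd h (by omega)⟩

lemma mp_hasPeriod (α : Word A n) (hn : 0 < n) : HasPeriod α (mp α) :=
  Nat.sInf_mem ⟨n, Set.mem_ofPred.mpr (hasPeriod_self α hn)⟩

lemma mp_le (α : Word A n) (hn : 0 < n) : mp α ≤ n :=
  Nat.sInf_le (Set.mem_ofPred.mpr (hasPeriod_self α hn))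

lemma shift_eq_of_hasPeriod {α : Word A n} {d : ℕ} (hp : HasPeriod α d) :
    shift d α = α := by
  funext i
  have hn : 0 < n := i.pos
  rw [shift_apply]
  have h1 : (i.1 + d) % n < n := Nat.mod_lt _ hn
  rw [eval_mod hp _ h1]
  conv_rhs => rw [← Fin.eta i i.isLt]
  rw [eval_mod hp i.1 i.isLt]
  congr 1
  apply Fin.ext
  show (i.1 + d) % n % d = i.1 % d
  rw [Nat.mod_mod_of_dvd _ hp.2.1, Nat.add_mod_right]

lemma hasPeriod_of_shift {α : Word A n} {d : ℕ} (hd : 0 < d) (hdvd : d ∣ n)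
    (h : shift d α = α) : HasPeriod α d := by
  refine ⟨hd, hdvd, fun i hi => ?_⟩
  have h2 := congrFun h ⟨i, by omega⟩
  rw [shift_apply] at h2
  simp only [Nat.mod_eq_of_lt hi] at h2
  exact h2.symm

lemma exists_mul_mod_eq_gcd (s : ℕ) (hn : 0 < n) :
    ∃ t : ℕ, (s * t) % n = Nat.gcd s n % n := by
  have hn' : (0:ℤ) < (n:ℤ) := by exact_mod_cast hn
  set a := Nat.gcdA s n with ha
  have hbez := Nat.gcd_eq_gcd_ab s n
  refine ⟨(a % (n:ℤ)).toNat, ?_⟩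
  have h0 : (0:ℤ) ≤ a % (n:ℤ) := Int.emod_nonneg a (by omega)
  have h1 : (((a % (n:ℤ)).toNat : ℕ) : ℤ) = a % (n:ℤ) := Int.toNat_of_nonneg h0
  have key : ((s * (a % (n:ℤ)).toNat : ℕ) : ℤ) % n = ((Nat.gcd s n : ℤ)) % n := by
    push_cast [h1]
    conv_rhs => rw [hbez, Int.add_mul_emod_self_left]
    rw [Int.mul_emod, Int.emod_emod_of_dvd _ dvd_rfl, ← Int.mul_emod]
  have := congrArg (fun z : ℤ => z) key
  exact_mod_cast key

lemma shift_gcd_eq_self {s : ℕ} (hn : 0 < n) {α : Word A n} (h : shift s α = α) :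
    shift (Nat.gcd s n) α = α := by
  have hmul : ∀ t, shift (s * t) α = α := by
    intro t; induction t with
    | zero => rw [Nat.mul_zero, shift_zero]
    | succ t ih => rw [Nat.mul_succ, ← shift_shift, ih, h]
  obtain ⟨t, ht⟩ := exists_mul_mod_eq_gcd (n := n) s hn
  calc shift (Nat.gcd s n) α = shift (Nat.gcd s n % n) α := (shift_mod _ _).symm
    _ = shift ((s * t) % n) α := by rw [ht]
    _ = shift (s * t) α := shift_mod _ _
    _ = α := hmul t

lemma dvd_le_half {d : ℕ} (hn : 0 < n) (hd : d ∣ n) (hne : d ≠ n) : d ≤ n / 2 := by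
  obtain ⟨c, hc⟩ := hd
  have hc2 : 2 ≤ c := by
    rcases Nat.lt_or_ge c 2 with h | h
    · interval_cases c <;> omega
    · exact h
  have : d * 2 ≤ d * c := Nat.mul_le_mul_left d hc2
  omega

lemma shift_ne_self {α : Word A n} (hprim : Primitive α) (hn2 : Even n) (hn : 0 < n)
    {s : ℕ} (hs : Even s) (h0 : 0 < s) (hsn : s < n) : shift s α ≠ α := by
  intro h
  set g := Nat.gcd s n with hg
  have hgpos : 0 < g := Nat.gcd_pos_of_pos_right _ hn
  have hgdvdn : g ∣ n := Nat.gcd_dvd_right s n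
  have hgdvds : g ∣ s := Nat.gcd_dvd_left s n
  have hgs : g ≤ s := Nat.le_of_dvd h0 hgdvds
  have hshift : shift g α = α := shift_gcd_eq_self hn h
  have hper : HasPeriod α g := hasPeriod_of_shift hgpos hgdvdn hshift
  have hmple : mp α ≤ g := Nat.sInf_le (Set.mem_ofPred.mpr hper)
  rcases hprim with hmp | ⟨hodd, hmp⟩
  · omega
  · have hgne : g ≠ n := by omega
    have hle : g ≤ n / 2 := dvd_le_half hn hgdvdn hgne
    have hgeq : g = n / 2 := by omega
    have hdvd : n / 2 ∣ s := hgeq ▸ hgdvds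
    obtain ⟨c, hc⟩ := hdvd
    have hceven : Even c := by
      rcases Nat.even_mul.mp (hc ▸ hs) with h' | h'
      · exact absurd h' (Nat.not_even_iff_odd.mpr hodd)
      · exact h'
    obtain ⟨e, he⟩ := hceven
    obtain ⟨n2, hn2'⟩ := hn2
    have hneq : n / 2 * 2 = n := by omega
    have h2 : n / 2 * (e + e) = (n / 2 * 2) * e := by ring
    have : n ∣ s := ⟨e, by rw [hc, he, h2, hneq]⟩
    have := Nat.le_of_dvd h0 this
    omega

lemma even_mod_of_even {s : ℕ} (hs : Even s) (hn2 : Even n) : Even (s % n) := by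
  rcases Nat.eq_zero_or_pos n with h | h
  · simpa [h] using hs
  have hd := Nat.mod_add_div s n
  have h2 : Even (n * (s / n)) := hn2.mul_right _
  rw [Nat.even_iff] at hs hn2 h2 ⊢
  omega

lemma hasPeriod_shift (hn : 0 < n) {α : Word A n} {d : ℕ} (hp : HasPeriod α d) (s : ℕ) :
    HasPeriod (shift s α) d := by
  refine hasPeriod_of_shift hp.1 hp.2.1 ?_
  rw [shift_shift, show s + d = d + s by ring, ← shift_shift,
    shift_eq_of_hasPeriod hp]

lemma mp_shift (hn : 0 < n) (α : Word A n) (s : ℕ) : mp (shift s α) = mp α := by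
  unfold mp
  congr 1
  ext d
  simp only [Set.mem_setOf_eq]
  constructor
  · intro hp
    have := hasPeriod_shift hn hp (n - s % n)
    rwa [shift_inv hn s α] at this
  · intro hp
    exact hasPeriod_shift hn hp s

lemma primitive_shift (hn : 0 < n) {α : Word A n} (h : Primitive α) (s : ℕ) :
    Primitive (shift s α) := by
  unfold Primitive at *
  rw [mp_shift hn α s]
  exact h

end Aux
section Counting
variable {A : ℕ}

lemma card_primWord_eq (A m : ℕ) (hm : 0 < m) :
    Nat.card (PrimWord A (2 * m)) = m * Nat.card (GeodClass A (2 * m)) := by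
  classical
  set n := 2 * m with hndef
  have hnpos : 0 < n := by omega
  have hneven : Even n := ⟨m, by omega⟩
  have heqv : Equivalence (fun α β : PrimWord A n => ShiftRel A n α.1 β.1) := by
    constructor
    · exact fun α => ⟨0, Even.zero, (shift_zero α.1).symm⟩
    · rintro α β ⟨s, hs, hβ⟩
      refine ⟨n - s % n, ?_, ?_⟩
      · have h1 : Even (s % n) := even_mod_of_even hs hneven
        have h2 : s % n ≤ n := le_of_lt (Nat.mod_lt _ hnpos)
        exact (Nat.even_sub h2).mpr (by simp [hneven, h1])
      · rw [hβ, shift_inv hnpos]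
    · rintro α β γ ⟨s, hs, hβ⟩ ⟨t, ht, hγ⟩
      exact ⟨s + t, hs.add ht, by rw [hγ, hβ, shift_shift]⟩
  let sd : Setoid (PrimWord A n) := ⟨fun α β : PrimWord A n => ShiftRel A n α.1 β.1, heqv⟩
  haveI : Fintype (PrimWord A n) := Fintype.ofFinite _
  haveI : Fintype (Quotient sd) := Fintype.ofFinite _
  have hcongr : Nat.card (PrimWord A n)
      = ∑ q : Quotient sd, Nat.card {x : PrimWord A n // Quotient.mk sd x = q} := by
    rw [← Nat.card_congr (Equiv.sigmaFiberEquiv (Quotient.mk sd))]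
    rw [Nat.card_eq_fintype_card, Fintype.card_sigma]
    simp [Nat.card_eq_fintype_card]
  have hfiber : ∀ q : Quotient sd, Nat.card {x : PrimWord A n // Quotient.mk sd x = q} = m := by
    intro q
    obtain ⟨ρ, hρ⟩ := q.exists_rep
    have hprimshift : ∀ t : ℕ, Primitive (shift t ρ.1) :=
      fun t => primitive_shift hnpos ρ.2 t
    have hmk : ∀ t : ℕ, Even t → Quotient.mk sd ⟨shift t ρ.1, hprimshift t⟩ = q := by
      intro t ht
      rw [← hρ]
      exact (Quotient.sound (⟨t, ht, rfl⟩ : sd.r ρ ⟨shift t ρ.1, hprimshift t⟩)).symm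
    let e : Fin m → {x : PrimWord A n // Quotient.mk sd x = q} := fun t =>
      ⟨⟨shift (2 * t.1) ρ.1, hprimshift _⟩, hmk _ (even_two_mul _)⟩
    have hkey : ∀ t t' : Fin m, t.1 ≤ t'.1 →
        shift (2 * t.1) ρ.1 = shift (2 * t'.1) ρ.1 → t = t' := by
      intro t t' hle heq
      by_contra hne
      have hlt : t.1 < t'.1 := lt_of_le_of_ne hle (fun h => hne (Fin.ext h))
      have h1 := congrArg (shift (n - (2 * t.1) % n)) heq
      rw [shift_inv hnpos] at h1
      rw [shift_shift] at h1
      rw [← shift_mod] at h1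
      have ht1 : 2 * t.1 < n := by have := t.2; omega
      have harith : (2 * t'.1 + (n - 2 * t.1 % n)) % n = 2 * (t'.1 - t.1) := by
        rw [Nat.mod_eq_of_lt ht1]
        have h2 : 2 * t'.1 + (n - 2 * t.1) = n + 2 * (t'.1 - t.1) := by
          have := t'.2; omega
        rw [h2, Nat.add_mod_left, Nat.mod_eq_of_lt (by have := t'.2; omega)]
      rw [harith] at h1
      exact shift_ne_self ρ.2 hneven hnpos (even_two_mul _) (by omega)
        (by have := t'.2; omega) h1.symm
    have hbij : Function.Bijective e := by
      constructor
      · intro t t' h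
        have h' : shift (2 * t.1) ρ.1 = shift (2 * t'.1) ρ.1 :=
          congrArg (fun x => x.1.1) h
        rcases le_total t.1 t'.1 with hle | hle
        · exact hkey t t' hle h'
        · exact (hkey t' t hle h'.symm).symm
      · rintro ⟨x, hx⟩
        have hxρ : sd.r ρ x := heqv.symm (Quotient.exact (hx.trans hρ.symm))
        obtain ⟨s, hs, hxeq⟩ := hxρ
        have hs' : Even (s % n) := even_mod_of_even hs hneven
        have hslt : s % n < n := Nat.mod_lt _ hnpos
        refine ⟨⟨s % n / 2, by omega⟩, ?_⟩
        apply Subtype.ext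
        apply Subtype.ext
        show shift (2 * (s % n / 2)) ρ.1 = x.1
        have : 2 * (s % n / 2) = s % n := by
          obtain ⟨c, hc⟩ := hs'; omega
        rw [this, shift_mod, ← hxeq]
    rw [Nat.card_congr (Equiv.ofBijective e hbij).symm, Nat.card_eq_fintype_card,
      Fintype.card_fin]
  rw [hcongr, Finset.sum_congr rfl (fun q _ => hfiber q), Finset.sum_const,
    Finset.card_univ, smul_eq_mul]
  have hq : Nat.card (GeodClass A n) = Fintype.card (Quotient sd) :=
    Nat.card_eq_fintype_card (α := Quotient sd)
  rw [hq, mul_comm]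

end Counting

section Bounds

lemma ncard_hasPeriod_le (A n d : ℕ) (hd : d ≤ n) :
    {α : Word A n | HasPeriod α d}.ncard ≤ A ^ d := by
  classical
  have hle : {α : Word A n | HasPeriod α d}.ncard ≤ (Set.univ : Set (Word A d)).ncard := by
    apply Set.ncard_le_ncard_of_injOn
      (fun α (i : Fin d) => α ⟨i.1, lt_of_lt_of_le i.isLt hd⟩)
    · intro a _; trivial
    · intro α hα β hβ hres
      funext i
      have hdpos : 0 < d := hα.1
      have h1 : i.1 % d < d := Nat.mod_lt _ hdpos
      calc α i = α ⟨i.1 % d, Nat.lt_of_le_of_lt (Nat.mod_le _ _) i.isLt⟩ :=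
            eval_mod hα i.1 i.isLt
        _ = β ⟨i.1 % d, Nat.lt_of_le_of_lt (Nat.mod_le _ _) i.isLt⟩ :=
            congrFun hres ⟨i.1 % d, h1⟩
        _ = β i := (eval_mod hβ i.1 i.isLt).symm
  rw [Set.ncard_univ, Nat.card_eq_fintype_card] at hle
  simpa using hle

lemma ncard_biUnion_le' {β : Type*} [Finite β] (t : Finset ℕ) (f : ℕ → Set β) :
    (⋃ d ∈ t, f d).ncard ≤ ∑ d ∈ t, (f d).ncard := by
  classical
  induction t using Finset.induction_on with
  | empty => simp
  | insert _ _ h ih =>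
    rw [Finset.set_biUnion_insert, Finset.sum_insert h]
    exact le_trans (Set.ncard_union_le _ _) (Nat.add_le_add_left ih _)

lemma sum_pow_le (A m : ℕ) (hA : 2 ≤ A) :
    ∑ d ∈ Finset.Icc 1 m, A ^ d ≤ 2 * A ^ m := by
  induction m with
  | zero => simp
  | succ m ih =>
    rw [Finset.sum_Icc_succ_top (by omega : 1 ≤ m + 1)]
    have h2 : 2 * A ^ m ≤ A ^ (m + 1) := by
      calc 2 * A ^ m = A ^ m * 2 := by ring
        _ ≤ A ^ m * A := Nat.mul_le_mul_left _ hA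
        _ = A ^ (m + 1) := (pow_succ A m).symm
    calc (∑ d ∈ Finset.Icc 1 m, A ^ d) + A ^ (m+1) ≤ 2 * A ^ m + A ^ (m+1) :=
          Nat.add_le_add_right ih _
      _ ≤ A ^ (m+1) + A ^ (m+1) := Nat.add_le_add_right h2 _
      _ = 2 * A ^ (m+1) := by ring

lemma card_prim_eq_ncard (A n : ℕ) :
    Nat.card (PrimWord A n) = {α : Word A n | Primitive α}.ncard :=
  (Nat.card_coe_set_eq _).symm

lemma card_prim_upper (A m : ℕ) (hm : 0 < m) :
    Nat.card (PrimWord A (2 * m)) ≤ A ^ (2 * m) + A ^ m := by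
  classical
  set n := 2 * m with hndef
  have hnpos : 0 < n := by omega
  rw [card_prim_eq_ncard]
  have hsub : {α : Word A n | Primitive α}
      ⊆ {α : Word A n | HasPeriod α n} ∪ {α : Word A n | HasPeriod α m} := by
    intro α hα
    rcases hα with h | ⟨hodd, h⟩
    · left
      have := mp_hasPeriod α hnpos
      rwa [h] at this
    · right
      have := mp_hasPeriod α hnpos
      rw [h] at this
      have hm2 : n / 2 = m := by omega
      rwa [hm2] at this
  calc {α : Word A n | Primitive α}.ncard
      ≤ ({α : Word A n | HasPeriod α n} ∪ {α : Word A n | HasPeriod α m}).ncard :=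
        Set.ncard_le_ncard hsub (Set.toFinite _)
    _ ≤ {α : Word A n | HasPeriod α n}.ncard + {α : Word A n | HasPeriod α m}.ncard :=
        Set.ncard_union_le _ _
    _ ≤ A ^ n + A ^ m :=
        Nat.add_le_add (ncard_hasPeriod_le A n n le_rfl)
          (ncard_hasPeriod_le A n m (by omega))

lemma card_prim_lower (A m : ℕ) (hm : 0 < m) (hA : 2 ≤ A) :
    A ^ (2 * m) ≤ Nat.card (PrimWord A (2 * m)) + 2 * A ^ m := by
  classical
  set n := 2 * m with hndef
  have hnpos : 0 < n := by omega
  have hU : (Set.univ : Set (Word A n)) ⊆ {α : Word A n | Primitive α}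
      ∪ ⋃ d ∈ Finset.Icc 1 m, {α : Word A n | HasPeriod α d} := by
    intro α _
    rcases eq_or_lt_of_le (mp_le α hnpos) with h | h
    · left; exact Or.inl h
    · right
      have hper := mp_hasPeriod α hnpos
      have hle : mp α ≤ n / 2 := dvd_le_half hnpos hper.2.1 (ne_of_lt h)
      exact Set.mem_biUnion (Finset.mem_Icc.mpr ⟨hper.1, by omega⟩) hper
  have h0 : (Set.univ : Set (Word A n)).ncard = A ^ n := by
    rw [Set.ncard_univ, Nat.card_eq_fintype_card]
    simp
  calc A ^ n = (Set.univ : Set (Word A n)).ncard := h0.symm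
    _ ≤ ({α : Word A n | Primitive α}
        ∪ ⋃ d ∈ Finset.Icc 1 m, {α : Word A n | HasPeriod α d}).ncard :=
        Set.ncard_le_ncard hU (Set.toFinite _)
    _ ≤ {α : Word A n | Primitive α}.ncard
        + (⋃ d ∈ Finset.Icc 1 m, {α : Word A n | HasPeriod α d}).ncard :=
        Set.ncard_union_le _ _
    _ ≤ Nat.card (PrimWord A n) + 2 * A ^ m := by
        rw [card_prim_eq_ncard]
        refine Nat.add_le_add_left ?_ _
        calc (⋃ d ∈ Finset.Icc 1 m, {α : Word A n | HasPeriod α d}).ncard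
            ≤ ∑ d ∈ Finset.Icc 1 m, {α : Word A n | HasPeriod α d}.ncard :=
              ncard_biUnion_le' _ _
          _ ≤ ∑ d ∈ Finset.Icc 1 m, A ^ d := by
              apply Finset.sum_le_sum
              intro d hd
              exact ncard_hasPeriod_le A n d (by
                have := (Finset.mem_Icc.mp hd).2; omega)
          _ ≤ 2 * A ^ m := sum_pow_le A m hA

lemma card_geodClass_zero (A : ℕ) : Nat.card (GeodClass A 0) = 0 := by
  haveI : IsEmpty (PrimWord A 0) := by
    constructor
    rintro ⟨α, hα⟩
    have h1 : HasPeriod α 1 := ⟨one_pos, dvd_zero 1, fun i h => absurd h (by omega)⟩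
    have hle : mp α ≤ 1 := Nat.sInf_le (Set.mem_ofPred.mpr h1)
    have hmem := Nat.sInf_mem (⟨1, Set.mem_ofPred.mpr h1⟩ :
      Set.Nonempty {d | HasPeriod α d})
    have hpos : 0 < mp α := hmem.1
    rcases hα with h | ⟨hodd, h⟩
    · omega
    · norm_num at hodd
  haveI : IsEmpty (GeodClass A 0) := ⟨@Quot.ind _ _ (fun _ => False) isEmptyElim⟩
  exact Nat.card_of_isEmpty

end Bounds

lemma piA_eq_sum (A k : ℕ) :
    piA A (2 * k) = ∑ m ∈ Finset.range (k + 1), Nat.card (GeodClass A (2 * m)) := by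
  classical
  haveI : ∀ n : ℕ, Fintype (GeodClass A n) := fun n => Fintype.ofFinite _
  haveI : Fintype {n : ℕ // n ≤ 2 * k ∧ Even n} := Fintype.ofFinite _
  unfold piA Geod
  rw [Nat.card_eq_fintype_card, Fintype.card_sigma]
  let e : Fin (k + 1) ≃ {n : ℕ // n ≤ 2 * k ∧ Even n} :=
    { toFun := fun m => ⟨2 * m.1, by have := m.2; omega, ⟨m.1, by ring⟩⟩
      invFun := fun x => ⟨x.1 / 2, by
        obtain ⟨c, hc⟩ := x.2.2
        have := x.2.1
        omega⟩
      left_inv := fun m => by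
        apply Fin.ext
        show 2 * m.1 / 2 = m.1
        omega
      right_inv := fun x => by
        apply Subtype.ext
        show 2 * (x.1 / 2) = x.1
        obtain ⟨c, hc⟩ := x.2.2
        omega }
  rw [← Equiv.sum_comp e (fun x => Fintype.card (GeodClass A x.1))]
  have hterm : ∀ m : Fin (k + 1),
      Fintype.card (GeodClass A (e m).1) = Nat.card (GeodClass A (2 * m.1)) :=
    fun m => (Nat.card_eq_fintype_card (α := GeodClass A (2 * m.1))).symm
  rw [Finset.sum_congr rfl (fun m _ => hterm m)]
  exact Fin.sum_univ_eq_sum_range (fun i => Nat.card (GeodClass A (2 * i))) (k + 1)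

section Analysis

lemma tendsto_weighted_geom_sum {x : ℝ} (hx0 : 0 ≤ x) (hx1 : x < 1) :
    Tendsto (fun k : ℕ => ∑ j ∈ Finset.range k, (k : ℝ) / ((k : ℝ) - (j : ℝ)) * x ^ j)
      atTop (nhds (1 - x)⁻¹) := by
  set f : ℕ → ℕ → ℝ :=
    fun k j => if j < k then (k : ℝ) / ((k : ℝ) - (j : ℝ)) * x ^ j else 0 with hf
  have hbnd : Summable (fun j : ℕ => ((j : ℝ) + 1) * x ^ j) := by
    have h1 : Summable (fun j : ℕ => (j : ℝ) * x ^ j) :=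
      (hasSum_coe_mul_geometric_of_norm_lt_one
        (by rwa [Real.norm_eq_abs, abs_of_nonneg hx0])).summable
    have h2 : Summable (fun j : ℕ => x ^ j) := summable_geometric_of_lt_one hx0 hx1
    simpa [add_mul, one_mul] using h1.add h2
  have hpt : ∀ j : ℕ, Tendsto (fun k => f k j) atTop (nhds (x ^ j)) := by
    intro j
    have h1 : Tendsto (fun k : ℕ => (k : ℝ) / ((k : ℝ) - (j : ℝ)) * x ^ j) atTop
        (nhds (1 * x ^ j)) := by
      apply Tendsto.mul_const
      have := tendsto_natCast_div_add_atTop (𝕜 := ℝ) (-(j : ℝ))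
      simpa [← sub_eq_add_neg] using this
    rw [one_mul] at h1
    apply h1.congr'
    filter_upwards [eventually_gt_atTop j] with k hk
    simp [hf, hk]
  have hb : ∀ (k : ℕ) (j : ℕ), ‖f k j‖ ≤ ((j : ℝ) + 1) * x ^ j := by
    intro k j
    rcases lt_or_ge j k with h | h
    · have hkj : (0 : ℝ) < (k : ℝ) - (j : ℝ) := by
        have : (j : ℝ) < (k : ℝ) := by exact_mod_cast h
        linarith
      have hnn : 0 ≤ (k : ℝ) / ((k : ℝ) - (j : ℝ)) * x ^ j :=
        mul_nonneg (div_nonneg (Nat.cast_nonneg _) hkj.le) (pow_nonneg hx0 _)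
      rw [hf]
      simp only [if_pos h]
      rw [Real.norm_eq_abs, abs_of_nonneg hnn]
      have key : (k : ℝ) ≤ ((j : ℝ) + 1) * ((k : ℝ) - (j : ℝ)) := by
        have hj : (0 : ℝ) ≤ (j : ℝ) := Nat.cast_nonneg _
        have hjk : (j : ℝ) + 1 ≤ (k : ℝ) := by exact_mod_cast h
        nlinarith
      have h2 : (k : ℝ) / ((k : ℝ) - (j : ℝ)) ≤ (j : ℝ) + 1 := by
        rw [div_le_iff₀ hkj]; exact key
      exact mul_le_mul_of_nonneg_right h2 (pow_nonneg hx0 _)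
    · rw [hf]
      simp only [if_neg (by omega : ¬ j < k)]
      simp only [norm_zero]
      exact mul_nonneg (by positivity) (pow_nonneg hx0 _)
  have hmain := tendsto_tsum_of_dominated_convergence hbnd hpt
    (Eventually.of_forall hb)
  have htsum : (∑' j : ℕ, x ^ j) = (1 - x)⁻¹ := tsum_geometric_of_lt_one hx0 hx1
  rw [htsum] at hmain
  apply hmain.congr
  intro k
  rw [tsum_eq_sum (s := Finset.range k)]
  · apply Finset.sum_congr rfl
    intro j hj
    simp [hf, Finset.mem_range.mp hj]
  · intro j hj
    have : ¬ j < k := fun h => hj (Finset.mem_range.mpr h)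
    simp [hf, this]

end Analysis


lemma sum_pow_le_real {a : ℝ} (ha : 2 ≤ a) (k : ℕ) :
    ∑ j ∈ Finset.range k, a ^ (j + 1) ≤ 2 * a ^ k := by
  have ha0 : (0:ℝ) < a := by linarith
  induction k with
  | zero => rw [Finset.range_zero, Finset.sum_empty]; positivity
  | succ k ih =>
    rw [Finset.sum_range_succ]
    have h2 : 2 * a ^ k ≤ a ^ (k + 1) := by
      rw [pow_succ]
      calc 2 * a ^ k = a ^ k * 2 := by ring
        _ ≤ a ^ k * a := by
            apply mul_le_mul_of_nonneg_left ha (pow_nonneg ha0.le _)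
    calc (∑ j ∈ Finset.range k, a ^ (j+1)) + a ^ (k+1)
        ≤ 2 * a ^ k + a ^ (k+1) := by linarith
      _ ≤ a ^ (k+1) + a ^ (k+1) := by linarith
      _ = 2 * a ^ (k+1) := by ring

lemma main_tendsto (A : ℕ) (hA : 1 < A) :
    Tendsto (fun k : ℕ => (piA A (2 * k) : ℝ) * k / (A : ℝ) ^ (2 * k))
      atTop (nhds ((1 - ((A : ℝ) ^ 2)⁻¹)⁻¹)) := by
  have hA2 : 2 ≤ A := hA
  have ha2 : (2:ℝ) ≤ (A:ℝ) := by exact_mod_cast hA2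
  have ha0 : (0:ℝ) < (A:ℝ) := by linarith
  have ha1 : (1:ℝ) < (A:ℝ) := by linarith
  have hane : (A:ℝ) ≠ 0 := ne_of_gt ha0
  set x : ℝ := (((A:ℝ)) ^ 2)⁻¹ with hxdef
  have hx0 : 0 ≤ x := inv_nonneg.mpr (by positivity)
  have hx1 : x < 1 := by
    rw [hxdef, inv_lt_one_iff₀]
    right; nlinarith
  have hG := tendsto_weighted_geom_sum hx0 hx1
  -- R as a sum
  have hexp : ∀ k : ℕ, (piA A (2 * k) : ℝ) * k / (A:ℝ) ^ (2 * k)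
      = ∑ j ∈ Finset.range k, (Nat.card (GeodClass A (2*(j+1))) : ℝ) * ((k : ℝ) / (A:ℝ) ^ (2 * k)) := by
    intro k
    have h0 : Nat.card (GeodClass A (2 * 0)) = 0 := by
      rw [Nat.mul_zero]; exact card_geodClass_zero A
    rw [piA_eq_sum]
    rw [Finset.sum_range_succ', h0, add_zero]
    push_cast
    rw [mul_div_assoc, Finset.sum_mul]
  -- G reindexed
  have hGalt : ∀ k : ℕ,
      (∑ j ∈ Finset.range k, (k : ℝ) / ((k : ℝ) - (j : ℝ)) * x ^ j)
      = ∑ j ∈ Finset.range k,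
          (A:ℝ) ^ (2*(j+1)) / ((j:ℝ)+1) * ((k:ℝ) / (A:ℝ) ^ (2*k)) := by
    intro k
    rw [← Finset.sum_range_reflect
      (fun j => (A:ℝ) ^ (2*(j+1)) / ((j:ℝ)+1) * ((k:ℝ) / (A:ℝ) ^ (2*k))) k]
    apply Finset.sum_congr rfl
    intro j hj
    have hjk : j < k := Finset.mem_range.mp hj
    have h1 : k - 1 - j + 1 = k - j := by omega
    have hc1 : ((k - 1 - j : ℕ) : ℝ) = (k:ℝ) - ((j:ℝ)+1) := by
      have h2 : k - 1 - j = k - (j+1) := by omega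
      rw [h2, Nat.cast_sub (by omega)]
      push_cast; ring
    rw [h1, hc1]
    have hsplit : (A:ℝ) ^ (2*k) = (A:ℝ) ^ (2*(k-j)) * (A:ℝ) ^ (2*j) := by
      rw [← pow_add]; congr 1; omega
    have hpow : x ^ j = (A:ℝ) ^ (2*(k-j)) / (A:ℝ) ^ (2*k) := by
      rw [hxdef, inv_pow, ← pow_mul, hsplit]
      rw [eq_div_iff (by positivity)]
      field_simp
    rw [hpow]
    have hkj : (k:ℝ) - ((j:ℝ)+1) + 1 = (k:ℝ) - (j:ℝ) := by ring
    rw [hkj]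
    have hne : (k:ℝ) - (j:ℝ) ≠ 0 := by
      have : (j:ℝ) < (k:ℝ) := by exact_mod_cast hjk
      linarith
    have hane2 : (A:ℝ) ^ (2*k) ≠ 0 := by positivity
    field_simp
  -- termwise bound
  have hterm : ∀ k : ℕ, ∀ j ∈ Finset.range k,
      |(Nat.card (GeodClass A (2*(j+1))) : ℝ) * ((k:ℝ)/(A:ℝ)^(2*k))
          - (A:ℝ) ^ (2*(j+1)) / ((j:ℝ)+1) * ((k:ℝ)/(A:ℝ)^(2*k))|
        ≤ 2 * (A:ℝ) ^ (j+1) * ((k:ℝ)/(A:ℝ)^(2*k)) := by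
    intro k j _
    have hm : 0 < j + 1 := Nat.succ_pos j
    have hcard := card_primWord_eq A (j+1) hm
    have hj1 : (0:ℝ) < (j:ℝ) + 1 := by positivity
    have hccast : (Nat.card (GeodClass A (2*(j+1))) : ℝ) = (Nat.card (PrimWord A (2*(j+1))) : ℝ) / ((j:ℝ)+1) := by
      have hc2 : (Nat.card (PrimWord A (2*(j+1))) : ℝ)
          = ((j:ℝ)+1) * (Nat.card (GeodClass A (2*(j+1))) : ℝ) := by
        exact_mod_cast hcard
      rw [hc2]; field_simp
    have hup : (Nat.card (PrimWord A (2*(j+1))) : ℝ) ≤ (A:ℝ) ^ (2*(j+1)) + (A:ℝ) ^ (j+1) := by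
      exact_mod_cast card_prim_upper A (j+1) hm
    have hlo : (A:ℝ) ^ (2*(j+1)) ≤ (Nat.card (PrimWord A (2*(j+1))) : ℝ) + 2 * (A:ℝ) ^ (j+1) := by
      exact_mod_cast card_prim_lower A (j+1) hm hA2
    have hpownn : (0:ℝ) ≤ (A:ℝ) ^ (j+1) := by positivity
    have habs : |(Nat.card (PrimWord A (2*(j+1))) : ℝ) - (A:ℝ) ^ (2*(j+1))| ≤ 2 * (A:ℝ) ^ (j+1) := by
      rw [abs_le]; constructor <;> linarith
    have hTnn : (0:ℝ) ≤ (k:ℝ)/(A:ℝ)^(2*k) := by positivity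
    rw [hccast]
    have heq : (Nat.card (PrimWord A (2*(j+1))) : ℝ) / ((j:ℝ)+1) * ((k:ℝ)/(A:ℝ)^(2*k))
        - (A:ℝ) ^ (2*(j+1)) / ((j:ℝ)+1) * ((k:ℝ)/(A:ℝ)^(2*k))
        = ((Nat.card (PrimWord A (2*(j+1))) : ℝ) - (A:ℝ) ^ (2*(j+1))) / ((j:ℝ)+1)
            * ((k:ℝ)/(A:ℝ)^(2*k)) := by
      ring
    rw [heq, abs_mul, abs_div, abs_of_nonneg hTnn, abs_of_nonneg hj1.le]
    apply mul_le_mul_of_nonneg_right _ hTnn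
    calc |(Nat.card (PrimWord A (2*(j+1))) : ℝ) - (A:ℝ) ^ (2*(j+1))| / ((j:ℝ)+1)
        ≤ |(Nat.card (PrimWord A (2*(j+1))) : ℝ) - (A:ℝ) ^ (2*(j+1))| :=
          div_le_self (abs_nonneg _) (by linarith [Nat.cast_nonneg (α := ℝ) j])
      _ ≤ 2 * (A:ℝ) ^ (j+1) := habs
  have hdiff : ∀ k : ℕ,
      |(piA A (2 * k) : ℝ) * k / (A:ℝ) ^ (2 * k)
        - ∑ j ∈ Finset.range k, (k : ℝ) / ((k : ℝ) - (j : ℝ)) * x ^ j|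
      ≤ 4 * ((k:ℝ) * ((A:ℝ)⁻¹)^k) := by
    intro k
    rw [hexp k, hGalt k, ← Finset.sum_sub_distrib]
    refine le_trans (Finset.abs_sum_le_sum_abs _ _) ?_
    have h1 := Finset.sum_le_sum (hterm k)
    refine le_trans h1 ?_
    have h2 : ∑ j ∈ Finset.range k, 2 * (A:ℝ)^(j+1) * ((k:ℝ)/(A:ℝ)^(2*k))
        = (∑ j ∈ Finset.range k, (A:ℝ)^(j+1)) * (2 * ((k:ℝ)/(A:ℝ)^(2*k))) := by
      rw [Finset.sum_mul]
      apply Finset.sum_congr rfl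
      intro j _
      ring
    rw [h2]
    have h3 : (∑ j ∈ Finset.range k, (A:ℝ)^(j+1)) * (2*((k:ℝ)/(A:ℝ)^(2*k)))
        ≤ (2*(A:ℝ)^k) * (2*((k:ℝ)/(A:ℝ)^(2*k))) :=
      mul_le_mul_of_nonneg_right (sum_pow_le_real ha2 k) (by positivity)
    refine le_trans h3 (le_of_eq ?_)
    rw [inv_pow]
    have hsp : (A:ℝ)^(2*k) = (A:ℝ)^k * (A:ℝ)^k := by rw [two_mul, pow_add]
    have hak : (A:ℝ)^k ≠ 0 := by positivity
    rw [hsp]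
    field_simp
    ring
  have hE : Tendsto (fun k : ℕ => 4 * ((k:ℝ) * ((A:ℝ)⁻¹)^k)) atTop (nhds 0) := by
    have h := tendsto_self_mul_const_pow_of_lt_one (inv_nonneg.mpr ha0.le)
      (by rw [inv_lt_one_iff₀]; right; exact ha1)
    have h4 := h.const_mul (4:ℝ)
    simpa using h4
  have hsub : Tendsto (fun k : ℕ =>
      (piA A (2 * k) : ℝ) * k / (A:ℝ) ^ (2 * k)
        - ∑ j ∈ Finset.range k, (k : ℝ) / ((k : ℝ) - (j : ℝ)) * x ^ j)
      atTop (nhds 0) :=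
    squeeze_zero_norm (fun k => by rw [Real.norm_eq_abs]; exact hdiff k) hE
  have hfinal := hG.add hsub
  rw [add_zero] at hfinal
  apply hfinal.congr
  intro k
  ring

-- STATEMENT 9
theorem stmt9 (A : ℕ) (hA : 1 < A) :
    Tendsto
      (fun k : ℕ =>
        (piA A (2 * k) : ℝ) /
          (2 * (A : ℝ) ^ 2 / ((A : ℝ) ^ 2 - 1) * (A : ℝ) ^ (2 * k) / ((2 * k : ℕ) : ℝ)))
      atTop (nhds 1) := by
  have hm := main_tendsto A hA
  have ha1 : (1:ℝ) < (A:ℝ) := by exact_mod_cast hA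
  have ha0 : (0:ℝ) < (A:ℝ) := by linarith
  have hsq : (1:ℝ) < (A:ℝ)^2 := by nlinarith
  have h1 : ((A:ℝ)^2) ≠ 0 := by positivity
  have h2 : ((A:ℝ)^2 - 1) ≠ 0 := by linarith
  have hc : ((1 - ((A:ℝ)^2)⁻¹)⁻¹) * (((A:ℝ)^2 - 1)/(A:ℝ)^2) = 1 := by
    rw [inv_eq_one_div, inv_eq_one_div]
    field_simp
  have hmul := hm.mul_const (((A:ℝ)^2 - 1)/(A:ℝ)^2)
  rw [hc] at hmul
  apply hmul.congr'
  filter_upwards [eventually_ge_atTop 1] with k hk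
  have hk0 : (0:ℝ) < (k:ℝ) := by exact_mod_cast hk
  have h4 : (k:ℝ) ≠ 0 := ne_of_gt hk0
  have h3 : (A:ℝ)^(2*k) ≠ 0 := by positivity
  push_cast
  field_simp


end Winding
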